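/- Let $(X_t)_{t=1}^T$ be random variables adapted to a filtration $(\mathcal{F}_t)_{t=0}^T$ such that almost surely $|X_t| \le b$ and $\mathbb{E}[X_t^2 \mid \mathcal{F}_{t-1}] \le \sigma_t^2$ for deterministic constants $b \ge 0$ and $\sigma_t^2$. Then for any $\delta \in (0,1]$, with probability at least $1 - \delta$, $\sum_{t=1}^T X_t^2 \le \frac{7b^2}{6}\ln\frac{1}{\delta} + 2\sum_{t=1}^T \sigma_t^2$. -/

import Mathlib

open MeasureTheory

lemma exp54_lt : Real.exp (5/4) < 7/2 := by
  have h1 : Real.exp 1 < 2.7182818286 := Real.exp_one_lt_d9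
  have h4 : Real.exp (5/4) ^ 4 = Real.exp 1 ^ 5 := by
    rw [← Real.exp_nat_mul, ← Real.exp_nat_mul]; norm_num
  have he : (0:ℝ) < Real.exp 1 := Real.exp_pos _
  have h5 : Real.exp 1 ^ 5 < 2.7182818286 ^ 5 :=
    pow_lt_pow_left₀ h1 he.le (by norm_num)
  have h6 : Real.exp (5/4) ^ 4 < (7/2 : ℝ) ^ 4 := by
    rw [h4]
    calc Real.exp 1 ^ 5 < 2.7182818286 ^ 5 := h5
      _ < (7/2 : ℝ)^4 := by norm_num
  exact lt_of_pow_lt_pow_left₀ 4 (by norm_num) h6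

lemma exp_conv {B z : ℝ} (hB : 0 < B) (h0 : 0 ≤ z) (hz : z ≤ B) :
    Real.exp (5 / (4 * B) * z) ≤ 1 + (Real.exp (5/4) - 1) / B * z := by
  have ha : (0:ℝ) ≤ 1 - z / B := by rw [sub_nonneg]; exact div_le_one_of_le₀ hz hB.le
  have hb : (0:ℝ) ≤ z / B := div_nonneg h0 hB.le
  have hab : (1 - z/B) + z/B = 1 := by ring
  have h := convexOn_exp.2 (Set.mem_univ (0:ℝ)) (Set.mem_univ (5/4 : ℝ)) ha hb hab
  simp only [smul_eq_mul, mul_zero, zero_add, Real.exp_zero, mul_one] at h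
  have e1 : z / B * (5/4) = 5 / (4 * B) * z := by field_simp
  rw [e1] at h
  calc Real.exp (5 / (4*B) * z) ≤ (1 - z/B) + z/B * Real.exp (5/4) := h
    _ = 1 + (Real.exp (5/4) - 1) / B * z := by field_simp; ring

theorem sum_squares_high_prob_bound {Ω : Type*} {m0 : MeasurableSpace Ω}
    (μ : Measure Ω) [IsProbabilityMeasure μ]
    (ℱ : Filtration ℕ m0) (T : ℕ) (X : ℕ → Ω → ℝ) (b : ℝ) (σ : ℕ → ℝ)
    (hb : 0 ≤ b)
    (hadapted : Adapted ℱ X)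
    (hbound : ∀ t, 1 ≤ t → t ≤ T → ∀ᵐ ω ∂μ, |X t ω| ≤ b)
    (hvar : ∀ t, 1 ≤ t → t ≤ T →
      ∀ᵐ ω ∂μ, (μ[fun ω' => X t ω' ^ 2 | ℱ (t - 1)]) ω ≤ σ t ^ 2)
    (δ : ℝ) (hδ0 : 0 < δ) (hδ1 : δ ≤ 1) :
    ENNReal.ofReal (1 - δ) ≤
      μ {ω | ∑ t ∈ Finset.Icc 1 T, X t ω ^ 2 ≤
        7 * b ^ 2 / 6 * Real.log (1 / δ) + 2 * ∑ t ∈ Finset.Icc 1 T, σ t ^ 2} := by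
  classical
  set L : ℝ := Real.log (1/δ) with hLdef
  set V : ℝ := ∑ t ∈ Finset.Icc 1 T, σ t ^ 2 with hVdef
  set a : ℝ := 7 * b ^ 2 / 6 * L + 2 * V with hadef
  set S : Ω → ℝ := fun ω => ∑ t ∈ Finset.Icc 1 T, X t ω ^ 2 with hSdef
  have hL : 0 ≤ L := Real.log_nonneg (one_le_one_div hδ0 hδ1)
  have hV : 0 ≤ V := Finset.sum_nonneg fun _ _ => sq_nonneg _
  have ha0 : 0 ≤ a := by
    have : 0 ≤ 7 * b ^ 2 / 6 * L := by positivity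
    simp only [hadef]; linarith
  -- measurability
  have hXsm : ∀ t, StronglyMeasurable (X t) := fun t => ((hadapted t).mono (ℱ.le t) le_rfl).stronglyMeasurable
  have hSm : Measurable S :=
    Finset.measurable_sum _ fun t _ => (hXsm t).measurable.pow_const 2
  have hsetm : MeasurableSet {ω | S ω ≤ a} := measurableSet_le hSm measurable_const
  -- key bound on the bad event
  have key : μ {ω | a < S ω} ≤ ENNReal.ofReal δ := by
    rcases eq_or_lt_of_le hb with hb0 | hbpos
    · -- b = 0 : all X t vanish a.e.
      have hae : ∀ᵐ ω ∂μ, ∀ t, t ∈ Finset.Icc 1 T → X t ω ^ 2 = 0 := by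
        rw [ae_all_iff]
        intro t
        by_cases ht : t ∈ Finset.Icc 1 T
        · obtain ⟨h1, h2⟩ := Finset.mem_Icc.mp ht
          filter_upwards [hbound t h1 h2] with ω hω _
          have : X t ω = 0 := by
            have := abs_nonneg (X t ω); nlinarith [abs_nonneg (X t ω), sq_abs (X t ω)]
          simp [this]
        · filter_upwards with ω h; exact absurd h ht
      have hz : μ {ω | a < S ω} = 0 := by
        rw [measure_eq_zero_iff_ae_notMem]
        filter_upwards [hae] with ω hω
        simp only [Set.mem_setOf_eq, not_lt]
        have : S ω = 0 := Finset.sum_eq_zero hω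
        rw [this]; exact ha0
      rw [hz]; exact zero_le
    · -- b > 0 : Chernoff bound
      set B : ℝ := b ^ 2 with hBdef
      have hB : 0 < B := by positivity
      set l : ℝ := 5 / (4 * B) with hldef
      have hl : 0 < l := by positivity
      set c : ℝ := (Real.exp (5/4) - 1) / B with hcdef
      have hc0 : 0 ≤ c := by
        have := Real.add_one_le_exp (5/4 : ℝ)
        apply div_nonneg _ hB.le; linarith
      set G : ℕ → Ω → ℝ := fun n ω => Real.exp (l * ∑ t ∈ Finset.Icc 1 n, X t ω ^ 2)
        with hGdef
      have hbAE : ∀ᵐ ω ∂μ, ∀ t, t ∈ Finset.Icc 1 T → X t ω ^ 2 ≤ B := by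
        rw [ae_all_iff]
        intro t
        by_cases ht : t ∈ Finset.Icc 1 T
        · obtain ⟨h1, h2⟩ := Finset.mem_Icc.mp ht
          filter_upwards [hbound t h1 h2] with ω hω _
          calc X t ω ^ 2 = |X t ω| ^ 2 := (sq_abs _).symm
            _ ≤ b ^ 2 := pow_le_pow_left₀ (abs_nonneg _) hω 2
        · filter_upwards with ω h; exact absurd h ht
      have hGm : ∀ n, Measurable (G n) := by
        intro n
        exact (measurable_const.mul
          (Finset.measurable_sum _ fun t _ => (hXsm t).measurable.pow_const 2)).exp
      have hGint : ∀ n, n ≤ T → Integrable (G n) μ := by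
        intro n hn
        refine Integrable.mono' (integrable_const (Real.exp (l * (T * B))))
          (hGm n).aestronglyMeasurable ?_
        filter_upwards [hbAE] with ω hω
        rw [Real.norm_eq_abs, abs_of_pos (Real.exp_pos _), Real.exp_le_exp]
        have h1 : ∑ t ∈ Finset.Icc 1 n, X t ω ^ 2 ≤ ∑ t ∈ Finset.Icc 1 T, X t ω ^ 2 :=
          Finset.sum_le_sum_of_subset_of_nonneg (Finset.Icc_subset_Icc_right hn)
            fun t _ _ => sq_nonneg _
        have h2 : ∑ t ∈ Finset.Icc 1 T, X t ω ^ 2 ≤ ∑ _t ∈ Finset.Icc 1 T, B :=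
          Finset.sum_le_sum fun t ht => hω t ht
        have h3 : ∑ _t ∈ Finset.Icc 1 T, (B:ℝ) = T * B := by
          rw [Finset.sum_const, Nat.card_Icc]; simp [nsmul_eq_mul]
        exact mul_le_mul_of_nonneg_left (by linarith) hl.le
      have hfint : ∀ n, 1 ≤ n → n ≤ T →
          Integrable (fun ω => Real.exp (l * X n ω ^ 2)) μ := by
        intro n h1n hnT
        refine Integrable.mono' (integrable_const (Real.exp (l * B)))
          ((measurable_const.mul ((hXsm n).measurable.pow_const 2)).exp).aestronglyMeasurable ?_
        filter_upwards [hbound n h1n hnT] with ω hω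
        rw [Real.norm_eq_abs, abs_of_pos (Real.exp_pos _), Real.exp_le_exp]
        have : X n ω ^ 2 ≤ B := by
          calc X n ω ^ 2 = |X n ω| ^ 2 := (sq_abs _).symm
            _ ≤ b ^ 2 := pow_le_pow_left₀ (abs_nonneg _) hω 2
        exact mul_le_mul_of_nonneg_left this hl.le
      have hX2int : ∀ n, 1 ≤ n → n ≤ T → Integrable (fun ω => X n ω ^ 2) μ := by
        intro n h1n hnT
        refine Integrable.mono' (integrable_const B)
          ((hXsm n).measurable.pow_const 2).aestronglyMeasurable ?_
        filter_upwards [hbound n h1n hnT] with ω hω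
        rw [Real.norm_eq_abs, abs_of_nonneg (sq_nonneg _)]
        calc X n ω ^ 2 = |X n ω| ^ 2 := (sq_abs _).symm
          _ ≤ b ^ 2 := pow_le_pow_left₀ (abs_nonneg _) hω 2
      -- the MGF induction
      have main : ∀ n, n ≤ T →
          ∫ ω, G n ω ∂μ ≤ Real.exp (c * ∑ t ∈ Finset.Icc 1 n, σ t ^ 2) := by
        intro n
        induction n with
        | zero =>
          intro _
          have he : Finset.Icc 1 0 = (∅ : Finset ℕ) := by
            apply Finset.Icc_eq_empty; omega
          simp [hGdef, he]
        | succ n ih =>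
          intro hn1
          have hn : n ≤ T := Nat.le_of_succ_le hn1
          have ihn := ih hn
          have hins : Finset.Icc 1 (n+1) = insert (n+1) (Finset.Icc 1 n) := by
            ext t; simp only [Finset.mem_Icc, Finset.mem_insert]; omega
          have hnotmem : (n+1) ∉ Finset.Icc 1 n := by simp [Finset.mem_Icc]
          have hsplit : ∀ ω, G (n+1) ω = G n ω * Real.exp (l * X (n+1) ω ^ 2) := by
            intro ω
            simp only [hGdef]
            rw [hins, Finset.sum_insert hnotmem, mul_add, Real.exp_add]; ring
          have hGnsm : StronglyMeasurable[ℱ n] (G n) := by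
            apply Measurable.stronglyMeasurable
            apply Measurable.exp
            apply Measurable.const_mul
            exact Finset.measurable_sum _ fun t ht =>
              (((hadapted t).mono (ℱ.mono (Finset.mem_Icc.mp ht).2) le_rfl)).pow_const 2
          have hint1 : Integrable (G n * fun ω => Real.exp (l * X (n+1) ω ^ 2)) μ :=
            (hGint (n+1) hn1).congr (Filter.Eventually.of_forall fun ω => (hsplit ω))
          have hpull : μ[G n * (fun ω => Real.exp (l * X (n+1) ω ^ 2)) | ℱ n]
              =ᵐ[μ] G n * μ[(fun ω => Real.exp (l * X (n+1) ω ^ 2)) | ℱ n] :=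
            condExp_mul_of_stronglyMeasurable_left hGnsm hint1 (hfint (n+1) (by omega) hn1)
          have hcx : μ[(fun ω => Real.exp (l * X (n+1) ω ^ 2)) | ℱ n]
              ≤ᵐ[μ] fun _ => Real.exp (c * σ (n+1) ^ 2) := by
            have hb1 : (fun ω => Real.exp (l * X (n+1) ω ^ 2))
                ≤ᵐ[μ] fun ω => 1 + c * X (n+1) ω ^ 2 := by
              filter_upwards [hbound (n+1) (by omega) hn1] with ω hω
              have hzB : X (n+1) ω ^ 2 ≤ B := by
                calc X (n+1) ω ^ 2 = |X (n+1) ω| ^ 2 := (sq_abs _).symm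
                  _ ≤ b ^ 2 := pow_le_pow_left₀ (abs_nonneg _) hω 2
              have := exp_conv hB (sq_nonneg (X (n+1) ω)) hzB
              rw [hldef, hcdef]; exact this
            have hrhs_int : Integrable (fun ω => 1 + c * X (n+1) ω ^ 2) μ :=
              (integrable_const 1).add ((hX2int (n+1) (by omega) hn1).const_mul c)
            have hmono := condExp_mono (m := ℱ n) (μ := μ)
              (hfint (n+1) (by omega) hn1) hrhs_int hb1
            have hadd : μ[(fun ω => 1 + c * X (n+1) ω ^ 2)|ℱ n]
                =ᵐ[μ] fun ω => 1 + c * (μ[fun ω' => X (n+1) ω' ^ 2 | ℱ n]) ω := by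
              have h1 : (fun ω => 1 + c * X (n+1) ω ^ 2)
                  = (fun _ => (1:ℝ)) + c • (fun ω => X (n+1) ω ^ 2) := by
                funext ω; simp [smul_eq_mul]
              rw [h1]
              have h2 := condExp_add (m := ℱ n) (μ := μ) (integrable_const (1:ℝ))
                ((hX2int (n+1) (by omega) hn1).smul c)
              have h3 := condExp_smul (m := ℱ n) (μ := μ) c (fun ω => X (n+1) ω ^ 2)
              have h4 := condExp_const (ℱ.le n) (1:ℝ) (μ := μ)
              filter_upwards [h2, h3] with ω e2 e3
              have e4 : (μ[(fun _ => (1:ℝ))|ℱ n]) ω = 1 := by rw [h4]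
              simp only [Pi.add_apply, Pi.smul_apply, smul_eq_mul] at e2 e3 ⊢
              rw [e2, e3, e4]
            have hσ := hvar (n+1) (by omega) hn1
            simp only [Nat.add_sub_cancel] at hσ
            filter_upwards [hmono, hadd, hσ] with ω h1 h2 h3
            have h5 : (μ[(fun ω => Real.exp (l * X (n+1) ω ^ 2))|ℱ n]) ω
                ≤ 1 + c * σ (n+1) ^ 2 := by
              have := mul_le_mul_of_nonneg_left h3 hc0
              calc (μ[(fun ω => Real.exp (l * X (n+1) ω ^ 2))|ℱ n]) ω
                  ≤ (μ[(fun ω => 1 + c * X (n+1) ω ^ 2)|ℱ n]) ω := h1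
                _ = 1 + c * (μ[fun ω' => X (n+1) ω' ^ 2 | ℱ n]) ω := h2
                _ ≤ 1 + c * σ (n+1) ^ 2 := by linarith
            have h6 : 1 + c * σ (n+1) ^ 2 ≤ Real.exp (c * σ (n+1) ^ 2) := by
              linarith [Real.add_one_le_exp (c * σ (n+1) ^ 2)]
            exact h5.trans h6
          have hle : μ[G (n+1)|ℱ n] ≤ᵐ[μ]
              fun ω => G n ω * Real.exp (c * σ (n+1) ^ 2) := by
            have hGe : μ[G (n+1)|ℱ n]
                =ᵐ[μ] μ[G n * (fun ω => Real.exp (l * X (n+1) ω ^ 2))|ℱ n] :=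
              condExp_congr_ae (Filter.Eventually.of_forall hsplit)
            filter_upwards [hGe, hpull, hcx] with ω h1 h2 h3
            rw [h1, h2]
            simp only [Pi.mul_apply]
            have hGnn : 0 ≤ G n ω := by simp only [hGdef]; positivity
            exact mul_le_mul_of_nonneg_left h3 hGnn
          calc ∫ ω, G (n+1) ω ∂μ
              = ∫ ω, (μ[G (n+1)|ℱ n]) ω ∂μ :=
                (integral_condExp (ℱ.le n)).symm
            _ ≤ ∫ ω, G n ω * Real.exp (c * σ (n+1) ^ 2) ∂μ :=
                integral_mono_ae integrable_condExp ((hGint n hn).mul_const _) hle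
            _ = (∫ ω, G n ω ∂μ) * Real.exp (c * σ (n+1) ^ 2) := integral_mul_const _ _
            _ ≤ Real.exp (c * ∑ t ∈ Finset.Icc 1 n, σ t ^ 2)
                  * Real.exp (c * σ (n+1) ^ 2) :=
                mul_le_mul_of_nonneg_right ihn (Real.exp_pos _).le
            _ = Real.exp (c * ∑ t ∈ Finset.Icc 1 (n+1), σ t ^ 2) := by
                rw [← Real.exp_add]; congr 1; rw [hins, Finset.sum_insert hnotmem]; ring
      -- Markov's inequality
      have hGTnn : 0 ≤ᵐ[μ] G T :=
        Filter.Eventually.of_forall fun ω => (Real.exp_pos _).le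
      have hMar := mul_meas_ge_le_integral_of_nonneg hGTnn (hGint T le_rfl)
        (Real.exp (l * a))
      have hsub : {ω | a < S ω} ⊆ {ω | Real.exp (l * a) ≤ G T ω} := by
        intro ω hω
        simp only [Set.mem_setOf_eq, hGdef] at *
        rw [Real.exp_le_exp]
        exact mul_le_mul_of_nonneg_left hω.le hl.le
      have h2 : Real.exp (l * a) * (μ {ω | Real.exp (l * a) ≤ G T ω}).toReal
          ≤ Real.exp (c * V) := hMar.trans (main T le_rfl)
      have htr : (μ {ω | a < S ω}).toReal ≤ (μ {ω | Real.exp (l * a) ≤ G T ω}).toReal :=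
        ENNReal.toReal_mono (measure_ne_top μ _) (measure_mono hsub)
      have h3 : (μ {ω | a < S ω}).toReal ≤ Real.exp (c * V) / Real.exp (l * a) := by
        rw [le_div_iff₀ (Real.exp_pos _)]
        nlinarith [Real.exp_pos (l * a), ENNReal.toReal_nonneg
          (a := μ {ω | Real.exp (l * a) ≤ G T ω})]
      have h4 : Real.exp (c * V) / Real.exp (l * a) ≤ δ := by
        rw [← Real.exp_sub]
        rw [show δ = Real.exp (Real.log δ) from (Real.exp_log hδ0).symm, Real.exp_le_exp]
        have hlog : Real.log δ = -L := by
          rw [hLdef, one_div, Real.log_inv]; ring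
        have heq : c * V - l * a
            = ((Real.exp (5/4) - 1 - 5/2) * V) / b ^ 2 - 35/24 * L := by
          rw [hcdef, hldef, hadef, hBdef]
          have hbne : (b:ℝ) ^ 2 ≠ 0 := by positivity
          field_simp
          ring
        have h5 : ((Real.exp (5/4) - 1 - 5/2) * V) / b ^ 2 ≤ 0 := by
          apply div_nonpos_of_nonpos_of_nonneg _ (by positivity)
          apply mul_nonpos_of_nonpos_of_nonneg _ hV
          linarith [exp54_lt]
        rw [heq, hlog]
        linarith
      have hne : μ {ω | a < S ω} ≠ ⊤ := measure_ne_top μ _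
      rw [← ENNReal.ofReal_toReal hne]
      exact ENNReal.ofReal_le_ofReal (h3.trans h4)
  -- conclude from the bad-event bound
  show ENNReal.ofReal (1 - δ) ≤ μ {ω | S ω ≤ a}
  have hc : {ω | S ω ≤ a}ᶜ = {ω | a < S ω} := by ext ω; simp [not_le]
  have huniv : μ Set.univ ≤ μ {ω | S ω ≤ a} + μ {ω | S ω ≤ a}ᶜ := by
    calc μ Set.univ = μ ({ω | S ω ≤ a} ∪ {ω | S ω ≤ a}ᶜ) := by
          rw [Set.union_compl_self]
      _ ≤ μ {ω | S ω ≤ a} + μ {ω | S ω ≤ a}ᶜ := measure_union_le _ _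
  calc ENNReal.ofReal (1 - δ) = ENNReal.ofReal 1 - ENNReal.ofReal δ :=
        ENNReal.ofReal_sub _ hδ0.le
    _ = 1 - ENNReal.ofReal δ := by rw [ENNReal.ofReal_one]
    _ ≤ 1 - μ {ω | a < S ω} := tsub_le_tsub_left key 1
    _ = μ Set.univ - μ {ω | S ω ≤ a}ᶜ := by rw [hc, measure_univ]
    _ ≤ μ {ω | S ω ≤ a} := tsub_le_iff_right.mpr huniv
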